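/- Let A, B be m×n real matrices. Then A Aᵀ = B Bᵀ if and only if there exists an orthogonal n×n real matrix V such that A = B V. -/

import Mathlib

open Matrix

private theorem gram_inner_aux (m n : ℕ) (C D : Matrix (Fin m) (Fin n) ℝ)
    (c d : EuclideanSpace ℝ (Fin m)) :
    inner ℝ (Matrix.toEuclideanLin Cᵀ c) (Matrix.toEuclideanLin Dᵀ d) =
      ∑ i, ∑ k, c i * d k * (C * Dᵀ) i k := by
  simp only [PiLp.inner_apply, RCLike.inner_apply, starRingEnd_apply, star_trivial,
    Matrix.toEuclideanLin_apply, PiLp.toLp_apply,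
    Matrix.mulVec, dotProduct, Matrix.mul_apply,
    Matrix.transpose_apply, Finset.mul_sum, Finset.sum_mul]
  rw [Finset.sum_comm]
  refine Finset.sum_congr rfl fun i _ => ?_
  rw [Finset.sum_comm]
  refine Finset.sum_congr rfl fun k _ => ?_
  refine Finset.sum_congr rfl fun j _ => ?_
  ring

private theorem matrix_eq_of_sums (n : ℕ) (G H : Matrix (Fin n) (Fin n) ℝ)
    (hyp : ∀ c d : EuclideanSpace ℝ (Fin n),
      ∑ i, ∑ k, c i * d k * G i k = ∑ i, ∑ k, c i * d k * H i k) : G = H := by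
  ext j l
  have := hyp (EuclideanSpace.single j 1) (EuclideanSpace.single l 1)
  simpa [EuclideanSpace.single_apply, ite_mul, Finset.sum_ite_eq] using this

theorem mul_transpose_eq_iff_exists_orthogonal (m n : ℕ)
    (A B : Matrix (Fin m) (Fin n) ℝ) :
    A * Aᵀ = B * Bᵀ ↔
      ∃ V : Matrix (Fin n) (Fin n) ℝ, V * Vᵀ = 1 ∧ Vᵀ * V = 1 ∧ A = B * V := by
  constructor
  · intro h
    set L : EuclideanSpace ℝ (Fin m) →ₗ[ℝ] EuclideanSpace ℝ (Fin n) :=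
      Matrix.toEuclideanLin Aᵀ with hL
    set M : EuclideanSpace ℝ (Fin m) →ₗ[ℝ] EuclideanSpace ℝ (Fin n) :=
      Matrix.toEuclideanLin Bᵀ with hM
    have hinner : ∀ c d, (inner ℝ (L c) (L d) : ℝ) = inner ℝ (M c) (M d) := by
      intro c d
      rw [hL, hM, gram_inner_aux, gram_inner_aux, h]
    have hker : LinearMap.ker M ≤ LinearMap.ker L := by
      intro c hc
      rw [LinearMap.mem_ker] at hc ⊢
      have h0 : (inner ℝ (L c) (L c) : ℝ) = 0 := by rw [hinner, hc, inner_zero_right]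
      exact inner_self_eq_zero.mp h0
    set T0 : LinearMap.range M →ₗ[ℝ] EuclideanSpace ℝ (Fin n) :=
      ((LinearMap.ker M).liftQ L hker).comp M.quotKerEquivRange.symm.toLinearMap with hT0def
    have hT0 : ∀ c, T0 ⟨M c, LinearMap.mem_range_self M c⟩ = L c := by
      intro c
      have h1 : M.quotKerEquivRange.symm ⟨M c, LinearMap.mem_range_self M c⟩ =
          (LinearMap.ker M).mkQ c := M.quotKerEquivRange_symm_apply_image c _
      rw [hT0def]
      simp only [LinearMap.comp_apply, LinearEquiv.coe_toLinearMap, h1]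
      simp [Submodule.mkQ_apply, Submodule.liftQ_apply]
    have hnorm : ∀ x : LinearMap.range M, ‖T0 x‖ = ‖x‖ := by
      rintro ⟨x, c, rfl⟩
      rw [hT0]
      have h2 : (inner ℝ (L c) (L c) : ℝ) = inner ℝ (M c) (M c) := hinner c c
      rw [@norm_eq_sqrt_re_inner ℝ, @norm_eq_sqrt_re_inner ℝ]
      · rw [Submodule.coe_inner, h2]
    set T0i : LinearMap.range M →ₗᵢ[ℝ] EuclideanSpace ℝ (Fin n) := ⟨T0, hnorm⟩ with hT0i
    set T := T0i.extend with hTdef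
    have hT : ∀ c, T (M c) = L c := by
      intro c
      have h3 := T0i.extend_apply ⟨M c, LinearMap.mem_range_self M c⟩
      rw [hT0i] at h3
      simpa [hT0 c] using h3
    set W : Matrix (Fin n) (Fin n) ℝ := Matrix.toEuclideanLin.symm T.toLinearMap with hWdef
    have hW : ∀ x : EuclideanSpace ℝ (Fin n), Matrix.toEuclideanLin W x = T x := by
      intro x
      rw [hWdef, Matrix.toEuclideanLin.apply_symm_apply]
      rfl
    have horth : Wᵀ * W = 1 := by
      refine matrix_eq_of_sums n _ _ fun c d => ?_
      have h4 : (inner ℝ (T c) (T d) : ℝ) = inner ℝ c d := T.inner_map_map c d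
      have h5 := gram_inner_aux n n Wᵀ Wᵀ c d
      rw [Matrix.transpose_transpose, hW, hW] at h5
      have h6 := gram_inner_aux n n 1 1 c d
      have h7 : Matrix.toEuclideanLin ((1 : Matrix (Fin n) (Fin n) ℝ)ᵀ) = LinearMap.id := by
        rw [Matrix.transpose_one]
        ext x
        simp [Matrix.toEuclideanLin_apply]
      rw [h7] at h6
      simp only [LinearMap.id_apply] at h6
      rw [Matrix.transpose_one, Matrix.mul_one] at h6
      rw [← h5, h4, h6]
    have horth2 : W * Wᵀ = 1 := mul_eq_one_comm.mp horth
    refine ⟨Wᵀ, by rwa [Matrix.transpose_transpose], by rwa [Matrix.transpose_transpose], ?_⟩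
    ext i j
    have key : Matrix.toEuclideanLin W (M (EuclideanSpace.single i 1)) =
        L (EuclideanSpace.single i 1) := by rw [hW]; exact hT _
    have h8 := congrArg (fun v : EuclideanSpace ℝ (Fin n) => v j) key
    simp only [hL, hM, Matrix.toEuclideanLin_apply, PiLp.toLp_apply,
      Matrix.mulVec, dotProduct, Matrix.transpose_apply,
      EuclideanSpace.single_apply, mul_ite, mul_one, mul_zero, Finset.sum_ite_eq, Finset.sum_ite_eq',
      Finset.mem_univ, if_true] at h8
    rw [Matrix.mul_apply]
    rw [← h8]
    refine Finset.sum_congr rfl fun k _ => ?_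
    rw [Matrix.transpose_apply, mul_comm]
  · rintro ⟨V, hV1, _, rfl⟩
    rw [Matrix.transpose_mul, Matrix.mul_assoc, ← Matrix.mul_assoc V, hV1, Matrix.one_mul]
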